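/- Let N ≥ 3, and let u : ℝ^N → ℝ be C¹ away from {x₁ = x₂ = 0}, invariant under rotations in the (x₁,x₂)-plane (i.e., u(x) depends only on r = √(x₁²+x₂²) and (x₃,…,x_N)). Define U : ℝ^N → ℝ^N by U(x) = (u(x)/r)(−x₂, x₁, 0, …, 0). Then div U = 0 and |∇U(x)|² = |∇u(x)|² + u(x)²/r² pointwise away from {r = 0}. -/

import Mathlib

open MeasureTheory

noncomputable section

/-- `r(x) = sqrt(x₁² + x₂²)` for `x ∈ ℝ^N`, `N ≥ 3`. -/
def rr (N : ℕ) (hN : 3 ≤ N) (x : EuclideanSpace ℝ (Fin N)) : ℝ :=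
  Real.sqrt (x ⟨0, by omega⟩ ^ 2 + x ⟨1, by omega⟩ ^ 2)

/-- The vector field `U(x) = (u(x)/r) (−x₂, x₁, 0, …, 0)`. -/
def Ufield (N : ℕ) (hN : 3 ≤ N) (u : EuclideanSpace ℝ (Fin N) → ℝ)
    (x : EuclideanSpace ℝ (Fin N)) : EuclideanSpace ℝ (Fin N) :=
  WithLp.toLp 2 (fun i => (u x / rr N hN x) *
    (if (i : ℕ) = 0 then -x ⟨1, by omega⟩ else if (i : ℕ) = 1 then x ⟨0, by omega⟩ else 0)
    : Fin N → ℝ)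

/-- Squared operator norm of a linear functional on Euclidean space. -/
lemma normsq_eq_sum {N : ℕ} (L : EuclideanSpace ℝ (Fin N) →L[ℝ] ℝ) :
    ‖L‖ ^ 2 = ∑ i, L (EuclideanSpace.single i 1) ^ 2 := by
  set v := (InnerProductSpace.toDual ℝ (EuclideanSpace ℝ (Fin N))).symm L with hvdef
  have hv : ∀ i, L (EuclideanSpace.single i 1) = v i := fun i => by
    have h := InnerProductSpace.toDual_symm_apply (𝕜 := ℝ) (y := L)
      (x := EuclideanSpace.single i (1 : ℝ))
    rw [← hvdef] at h
    rw [← h, EuclideanSpace.inner_single_right]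
    simp
  have hnorm : ‖L‖ = ‖v‖ := ((InnerProductSpace.toDual ℝ _).symm.norm_map L).symm
  rw [hnorm, EuclideanSpace.norm_eq, Real.sq_sqrt (by positivity)]
  simp [hv, sq_abs]

/-- The tangential derivative of an `O(2) × id`-invariant function vanishes. -/
lemma tangent_deriv (N : ℕ) (hN : 3 ≤ N) (u : EuclideanSpace ℝ (Fin N) → ℝ)
    (hinv : ∀ x x' : EuclideanSpace ℝ (Fin N), rr N hN x = rr N hN x' →
      (∀ i : Fin N, 2 ≤ (i : ℕ) → x i = x' i) → u x = u x')
    (x : EuclideanSpace ℝ (Fin N)) (hu : DifferentiableAt ℝ u x) :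
    fderiv ℝ u x (EuclideanSpace.single (⟨0, by omega⟩ : Fin N) (-(x ⟨1, by omega⟩))
      + EuclideanSpace.single (⟨1, by omega⟩ : Fin N) (x ⟨0, by omega⟩)) = 0 := by
  set i0 : Fin N := ⟨0, by omega⟩ with hi0
  set i1 : Fin N := ⟨1, by omega⟩ with hi1
  have hne : i0 ≠ i1 := by simp [hi0, hi1, Fin.ext_iff]
  set A : EuclideanSpace ℝ (Fin N) :=
    EuclideanSpace.single i0 (x i0) + EuclideanSpace.single i1 (x i1) with hA
  set B : EuclideanSpace ℝ (Fin N) :=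
    EuclideanSpace.single i0 (-(x i1)) + EuclideanSpace.single i1 (x i0) with hB
  set c : ℝ → EuclideanSpace ℝ (Fin N) :=
    fun t => Real.cos t • A + Real.sin t • B + (x - A) with hc
  have hc0 : c 0 = x := by simp [hc]
  have hcd : HasDerivAt c B 0 := by
    have h1 : HasDerivAt (fun t : ℝ => Real.cos t • A) ((-Real.sin 0) • A) 0 :=
      (Real.hasDerivAt_cos 0).smul_const A
    have h2 : HasDerivAt (fun t : ℝ => Real.sin t • B) ((Real.cos 0) • B) 0 :=
      (Real.hasDerivAt_sin 0).smul_const B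
    have := (h1.add h2).add_const (x - A)
    simpa [hc] using this
  have hcA : ∀ t, (c t) i0 = x i0 * Real.cos t - x i1 * Real.sin t := by
    intro t
    simp [hc, hA, hB, EuclideanSpace.single_apply, hne, hne.symm]
    ring
  have hcB : ∀ t, (c t) i1 = x i1 * Real.cos t + x i0 * Real.sin t := by
    intro t
    simp [hc, hA, hB, EuclideanSpace.single_apply, hne, hne.symm]
    ring
  have hhigh : ∀ t, ∀ i : Fin N, 2 ≤ (i : ℕ) → (c t) i = x i := by
    intro t i hi
    have h0 : i ≠ i0 := by simp [hi0, Fin.ext_iff]; omega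
    have h1 : i ≠ i1 := by simp [hi1, Fin.ext_iff]; omega
    simp [hc, hA, hB, EuclideanSpace.single_apply, h0, h1]
  have hconst : ∀ t, u (c t) = u x := by
    intro t
    refine hinv (c t) x ?_ (fun i hi => hhigh t i hi)
    have h2 : (c t) i0 ^ 2 + (c t) i1 ^ 2 = x i0 ^ 2 + x i1 ^ 2 := by
      rw [hcA, hcB]
      nlinarith [Real.sin_sq_add_cos_sq t]
    show Real.sqrt ((c t) i0 ^ 2 + (c t) i1 ^ 2) = Real.sqrt (x i0 ^ 2 + x i1 ^ 2)
    rw [h2]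
  have hcomp : HasDerivAt (fun t => u (c t)) (fderiv ℝ u x B) 0 :=
    hu.hasFDerivAt.comp_hasDerivAt_of_eq 0 hcd hc0.symm
  have hconst' : HasDerivAt (fun t => u (c t)) 0 0 := by
    have : (fun t => u (c t)) = fun _ => u x := funext hconst
    rw [this]; exact hasDerivAt_const 0 (u x)
  exact hcomp.unique hconst'

set_option maxHeartbeats 2000000 in
theorem stmt11 (N : ℕ) (hN : 3 ≤ N) (u : EuclideanSpace ℝ (Fin N) → ℝ)
    (hreg : ∀ x, rr N hN x ≠ 0 → DifferentiableAt ℝ u x)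
    (hinv : ∀ x x' : EuclideanSpace ℝ (Fin N), rr N hN x = rr N hN x' →
      (∀ i : Fin N, 2 ≤ (i : ℕ) → x i = x' i) → u x = u x') :
    ∀ x, rr N hN x ≠ 0 →
      (∑ i : Fin N, fderiv ℝ (fun y => Ufield N hN u y i) x (EuclideanSpace.single i 1)) = 0
      ∧ (∑ i : Fin N, ‖fderiv ℝ (fun y => Ufield N hN u y i) x‖ ^ 2)
          = ‖fderiv ℝ u x‖ ^ 2 + u x ^ 2 / rr N hN x ^ 2 := by
  intro x hx
  have hi0lt : 0 < N := by omega
  have hi1lt : 1 < N := by omega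
  set i0 : Fin N := ⟨0, by omega⟩ with hi0
  set i1 : Fin N := ⟨1, by omega⟩ with hi1
  have hne : i0 ≠ i1 := by simp [hi0, hi1, Fin.ext_iff]
  set r : ℝ := rr N hN x with hrdef
  have hr : r ≠ 0 := hx
  have hsum_nonneg : (0:ℝ) ≤ x i0 ^ 2 + x i1 ^ 2 := by positivity
  have hr2 : x i0 ^ 2 + x i1 ^ 2 = r ^ 2 := (Real.sq_sqrt hsum_nonneg).symm
  have hsum_ne : x i0 ^ 2 + x i1 ^ 2 ≠ 0 := by
    intro h; apply hr; rw [hrdef]; show Real.sqrt (x i0 ^2 + x i1 ^2) = 0; rw [h]; simp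
  set L := fderiv ℝ u x with hL
  have hu : HasFDerivAt u L x := (hreg x hx).hasFDerivAt
  set p : Fin N → ℝ := fun j => L (EuclideanSpace.single j 1) with hp
  -- derivative of rr
  set φ' : EuclideanSpace ℝ (Fin N) →L[ℝ] ℝ :=
    ((2:ℕ) * x i0 ^ 1) • (EuclideanSpace.proj i0 : EuclideanSpace ℝ (Fin N) →L[ℝ] ℝ)
      + ((2:ℕ) * x i1 ^ 1) • (EuclideanSpace.proj i1 : EuclideanSpace ℝ (Fin N) →L[ℝ] ℝ)
    with hφ'
  have hφ : HasFDerivAt (fun y : EuclideanSpace ℝ (Fin N) => y i0 ^ 2 + y i1 ^ 2) φ' x := by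
    exact ((hasDerivAt_pow 2 (x i0)).comp_hasFDerivAt x
        ((EuclideanSpace.proj i0 : EuclideanSpace ℝ (Fin N) →L[ℝ] ℝ)).hasFDerivAt).add
      ((hasDerivAt_pow 2 (x i1)).comp_hasFDerivAt x
        ((EuclideanSpace.proj i1 : EuclideanSpace ℝ (Fin N) →L[ℝ] ℝ)).hasFDerivAt)
  set R : EuclideanSpace ℝ (Fin N) →L[ℝ] ℝ := (1 / (2 * r)) • φ' with hRdef
  have hR : HasFDerivAt (rr N hN) R x := hφ.sqrt hsum_ne
  have hRinv : HasFDerivAt (fun y => (rr N hN y)⁻¹) ((-(r ^ 2)⁻¹) • R) x :=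
    (hasDerivAt_inv hr).comp_hasFDerivAt x hR
  set M : EuclideanSpace ℝ (Fin N) →L[ℝ] ℝ :=
    u x • ((-(r ^ 2)⁻¹) • R) + r⁻¹ • L with hMdef
  have hM : HasFDerivAt (fun y => u y * (rr N hN y)⁻¹) M x := hu.mul hRinv
  set D0 : EuclideanSpace ℝ (Fin N) →L[ℝ] ℝ :=
    (u x * r⁻¹) • (-(EuclideanSpace.proj i1 : EuclideanSpace ℝ (Fin N) →L[ℝ] ℝ))
      + (-(x i1)) • M with hD0def
  set D1 : EuclideanSpace ℝ (Fin N) →L[ℝ] ℝ :=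
    (u x * r⁻¹) • (EuclideanSpace.proj i0 : EuclideanSpace ℝ (Fin N) →L[ℝ] ℝ)
      + (x i0) • M with hD1def
  have h0 : HasFDerivAt (fun y => Ufield N hN u y i0) D0 x := by
    have h := hM.mul ((EuclideanSpace.proj (𝕜 := ℝ) i1).hasFDerivAt (x := x)).neg
    refine h.congr_of_eventuallyEq (Filter.Eventually.of_forall fun y => ?_)
    simp [Ufield, div_eq_mul_inv, hi0, hi1]
  have h1 : HasFDerivAt (fun y => Ufield N hN u y i1) D1 x := by
    have h := hM.mul ((EuclideanSpace.proj (𝕜 := ℝ) i0).hasFDerivAt (x := x))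
    refine h.congr_of_eventuallyEq (Filter.Eventually.of_forall fun y => ?_)
    simp [Ufield, div_eq_mul_inv, hi0, hi1]
  have key : ∀ i : Fin N, fderiv ℝ (fun y => Ufield N hN u y i) x
      = if i = i0 then D0 else if i = i1 then D1 else 0 := by
    intro i
    by_cases e0 : i = i0
    · subst e0; simp [h0.fderiv]
    by_cases e1 : i = i1
    · subst e1; simp [e0, h1.fderiv]
    · have hv0 : (i : ℕ) ≠ 0 := by
        intro h; exact e0 (by simp [hi0, Fin.ext_iff, h])
      have hv1 : (i : ℕ) ≠ 1 := by
        intro h; exact e1 (by simp [hi1, Fin.ext_iff, h])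
      have hfun : (fun y => Ufield N hN u y i) = fun _ => (0:ℝ) := by
        funext y; simp [Ufield, hv0, hv1]
      simp [e0, e1, hfun]
  -- tangential derivative
  have hT0 : L (EuclideanSpace.single i0 (-(x i1)) + EuclideanSpace.single i1 (x i0)) = 0 :=
    tangent_deriv N hN u hinv x (hreg x hx)
  have hsingle_smul : ∀ (j : Fin N) (a : ℝ),
      EuclideanSpace.single j a = a • EuclideanSpace.single j (1:ℝ) := by
    intro j a
    ext k
    simp [EuclideanSpace.single_apply, mul_ite]
  have hT : -(x i1) * p i0 + x i0 * p i1 = 0 := by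
    have h2 := hT0
    rw [map_add, hsingle_smul i0 (-(x i1)), hsingle_smul i1 (x i0),
      ContinuousLinearMap.map_smul, ContinuousLinearMap.map_smul] at h2
    exact h2
  -- evaluation of M
  have hMval : ∀ j : Fin N, M (EuclideanSpace.single j 1)
      = u x * (-(r ^ 2)⁻¹ * ((1 / (2 * r)) *
          ((2 : ℕ) * x i0 ^ 1 * (if i0 = j then (1:ℝ) else 0)
            + (2 : ℕ) * x i1 ^ 1 * (if i1 = j then (1:ℝ) else 0))))
        + r⁻¹ * p j := by
    intro j
    simp only [hMdef, hRdef, hφ', hp, ContinuousLinearMap.add_apply,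
      ContinuousLinearMap.coe_smul', Pi.smul_apply, smul_eq_mul,
      PiLp.proj_apply, EuclideanSpace.single_apply]
  have hD0val : ∀ j : Fin N, D0 (EuclideanSpace.single j 1)
      = (u x * r⁻¹) * (-(if i1 = j then (1:ℝ) else 0))
        + (-(x i1)) * M (EuclideanSpace.single j 1) := by
    intro j
    simp [hD0def, EuclideanSpace.single_apply]
  have hD1val : ∀ j : Fin N, D1 (EuclideanSpace.single j 1)
      = (u x * r⁻¹) * (if i0 = j then (1:ℝ) else 0)
        + (x i0) * M (EuclideanSpace.single j 1) := by
    intro j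
    simp [hD1def, EuclideanSpace.single_apply]
  constructor
  · -- divergence
    have hsum : ∑ i : Fin N, fderiv ℝ (fun y => Ufield N hN u y i) x (EuclideanSpace.single i 1)
        = D0 (EuclideanSpace.single i0 1) + D1 (EuclideanSpace.single i1 1) := by
      simp only [key]
      rw [← Finset.sum_subset (Finset.subset_univ ({i0, i1} : Finset (Fin N)))
        (fun i _ hi => ?_)]
      · rw [Finset.sum_pair hne]
        simp [hne, hne.symm]
      · simp only [Finset.mem_insert, Finset.mem_singleton, not_or] at hi
        simp [hi.1, hi.2]
    rw [hsum, hD0val, hD1val, hMval, hMval]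
    simp only [hne, hne.symm, if_pos, if_neg, ite_true, ite_false]
    push_cast
    linear_combination r⁻¹ * hT
  · -- energy
    have hsum : ∑ i : Fin N, ‖fderiv ℝ (fun y => Ufield N hN u y i) x‖ ^ 2
        = ‖D0‖ ^ 2 + ‖D1‖ ^ 2 := by
      simp only [key]
      rw [← Finset.sum_subset (Finset.subset_univ ({i0, i1} : Finset (Fin N)))
        (fun i _ hi => ?_)]
      · rw [Finset.sum_pair hne]
        simp [hne, hne.symm]
      · simp only [Finset.mem_insert, Finset.mem_singleton, not_or] at hi
        simp [hi.1, hi.2]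
    rw [hsum, normsq_eq_sum, normsq_eq_sum, show ‖L‖ ^ 2 = ∑ j, p j ^ 2 from normsq_eq_sum L]
    rw [← Finset.sum_add_distrib]
    have hterm : ∀ j : Fin N,
        D0 (EuclideanSpace.single j 1) ^ 2 + D1 (EuclideanSpace.single j 1) ^ 2
          = (D0 (EuclideanSpace.single j 1) ^ 2 + D1 (EuclideanSpace.single j 1) ^ 2
              - p j ^ 2) + p j ^ 2 := fun j => by ring
    rw [Finset.sum_congr rfl (fun j _ => hterm j), Finset.sum_add_distrib]
    have hrest : ∑ j : Fin N, (D0 (EuclideanSpace.single j 1) ^ 2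
        + D1 (EuclideanSpace.single j 1) ^ 2 - p j ^ 2) = u x ^ 2 / r ^ 2 := by
      rw [← Finset.sum_subset (Finset.subset_univ ({i0, i1} : Finset (Fin N)))
        (fun j _ hj => ?_)]
      · rw [Finset.sum_pair hne]
        have hA : D0 (EuclideanSpace.single i0 1)
            = -(x i1) * (p i0 * r ^ 2 - u x * x i0) / r ^ 3 := by
          rw [hD0val, hMval]
          simp only [hne, hne.symm, if_pos, if_neg, ite_true, ite_false]
          push_cast
          field_simp
          ring
        have hB : D1 (EuclideanSpace.single i0 1)
            = (u x * r ^ 2 + x i0 * (p i0 * r ^ 2 - u x * x i0)) / r ^ 3 := by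
          rw [hD1val, hMval]
          simp only [hne, hne.symm, if_pos, if_neg, ite_true, ite_false]
          push_cast
          field_simp
          ring
        have hC : D0 (EuclideanSpace.single i1 1)
            = -(u x * r ^ 2 + x i1 * (p i1 * r ^ 2 - u x * x i1)) / r ^ 3 := by
          rw [hD0val, hMval]
          simp only [hne, hne.symm, if_pos, if_neg, ite_true, ite_false]
          push_cast
          field_simp
          ring
        have hD : D1 (EuclideanSpace.single i1 1)
            = x i0 * (p i1 * r ^ 2 - u x * x i1) / r ^ 3 := by
          rw [hD1val, hMval]
          simp only [hne, hne.symm, if_pos, if_neg, ite_true, ite_false]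
          push_cast
          field_simp
          ring
        rw [hA, hB, hC, hD]
        field_simp
        linear_combination ((p i0 ^ 2 + p i1 ^ 2) * r ^ 4
          - 2 * u x * r ^ 2 * (x i0 * p i0 + x i1 * p i1)
          + u x ^ 2 * (x i0 ^ 2 + x i1 ^ 2 - r ^ 2)) * hr2
      · simp only [Finset.mem_insert, Finset.mem_singleton, not_or] at hj
        rw [hD0val, hD1val, hMval]
        have e0 : (i0 = j) = False := by simp [Ne.symm hj.1]
        have e1 : (i1 = j) = False := by simp [Ne.symm hj.2]
        simp only [e0, e1, ite_false]
        push_cast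
        field_simp
        linear_combination p j ^ 2 * r ^ 4 * hr2
    rw [hrest]
    ring
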